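/- arXiv:0812.2225 — 3 statements merged into one kernel-verified Lean document; each statement's English description precedes it below -/
import Mathlib

section
/- Let R be a skew invertible R-matrix on V⊗V with skew inverse Ψ and D := Tr_{(2)}Ψ. Let 𝔄 be a unital associative ℂ-algebra and Y an m×m matrix with entries in 𝔄. Then for each sign ε = ±1, the partial R-trace over the second factor satisfies Tr_{(2)}(D₂ · R₁₂^{ε} Y₁ R₁₂^{−ε}) = Tr_R(Y) · I, where Y₁ := Y⊗I is the m²×m² matrix over 𝔄 acting as Y in the first factor, R acts by its scalar entries, and Tr_R(Y) := Σ_{i,j} D_{ji} Y_{ij} ∈ 𝔄. -/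
namespace QCB

open Matrix

/-- operators on `V`, `V = ℂ^m` (entries in `A`) -/
abbrev M1 (m : ℕ) (A : Type*) := Matrix (Fin m) (Fin m) A
/-- operators on `V ⊗ V` -/
abbrev M2 (m : ℕ) (A : Type*) := Matrix (Fin m × Fin m) (Fin m × Fin m) A
/-- operators on `V ⊗ V ⊗ V` -/
abbrev M3 (m : ℕ) (A : Type*) :=
  Matrix (Fin m × Fin m × Fin m) (Fin m × Fin m × Fin m) A
/-- operators on `V^{⊗k}` -/
abbrev MN (m k : ℕ) (A : Type*) := Matrix (Fin k → Fin m) (Fin k → Fin m) A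

/-- Kronecker delta -/
def kd (A : Type*) [Zero A] [One A] {ι : Type*} [DecidableEq ι] (a b : ι) : A :=
  if a = b then 1 else 0

variable {m : ℕ} {A : Type*}

section emb
variable [NonAssocSemiring A]

/-- `X ⊗ I` on `V ⊗ V` -/
def f1 (X : M1 m A) : M2 m A := Matrix.of fun p q => X p.1 q.1 * kd A p.2 q.2
/-- `I ⊗ X` on `V ⊗ V` -/
def f2 (X : M1 m A) : M2 m A := Matrix.of fun p q => kd A p.1 q.1 * X p.2 q.2
/-- `X ⊗ I ⊗ I` on `V^{⊗3}` -/
def e1 (X : M1 m A) : M3 m A :=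
  Matrix.of fun p q => X p.1 q.1 * (kd A p.2.1 q.2.1 * kd A p.2.2 q.2.2)
/-- `I ⊗ I ⊗ X` on `V^{⊗3}` -/
def e3 (X : M1 m A) : M3 m A :=
  Matrix.of fun p q => kd A p.1 q.1 * (kd A p.2.1 q.2.1 * X p.2.2 q.2.2)
/-- `X₁₂` on `V^{⊗3}` -/
def e12 (X : M2 m A) : M3 m A :=
  Matrix.of fun p q => X (p.1, p.2.1) (q.1, q.2.1) * kd A p.2.2 q.2.2
/-- `X₂₃` on `V^{⊗3}` -/
def e23 (X : M2 m A) : M3 m A :=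
  Matrix.of fun p q => kd A p.1 q.1 * X (p.2.1, p.2.2) (q.2.1, q.2.2)

/-- partial trace over the 1st of three factors -/
def tr1of3 (X : M3 m A) : M2 m A :=
  Matrix.of fun p q => ∑ a : Fin m, X (a, p.1, p.2) (a, q.1, q.2)
/-- partial trace over the 2nd of three factors -/
def tr2of3 (X : M3 m A) : M2 m A :=
  Matrix.of fun p q => ∑ b : Fin m, X (p.1, b, p.2) (q.1, b, q.2)
/-- partial trace over the 3rd of three factors -/
def tr3of3 (X : M3 m A) : M2 m A :=
  Matrix.of fun p q => ∑ c : Fin m, X (p.1, p.2, c) (q.1, q.2, c)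
/-- partial trace over the 1st of two factors -/
def tr1of2 (X : M2 m A) : M1 m A :=
  Matrix.of fun i j => ∑ a : Fin m, X (a, i) (a, j)
/-- partial trace over the 2nd of two factors -/
def tr2of2 (X : M2 m A) : M1 m A :=
  Matrix.of fun i j => ∑ b : Fin m, X (i, b) (j, b)

/-- permutation operator `P` on `V ⊗ V` -/
def permP (m : ℕ) (A : Type*) [NonAssocSemiring A] : M2 m A :=
  Matrix.of fun p q => kd A p.1 q.2 * kd A p.2 q.1

/-- `D := Tr₍₂₎ Ψ` -/
def Dmat (Ψ : M2 m A) : M1 m A := tr2of2 Ψ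
/-- `C := Tr₍₁₎ Ψ` -/
def Cmat (Ψ : M2 m A) : M1 m A := tr1of2 Ψ

end emb

section ops
variable [Semiring A]

/-- braid (Yang–Baxter) relation `R₁R₂R₁ = R₂R₁R₂` on `V^{⊗3}` -/
def IsBraid (R : M2 m A) : Prop :=
  e12 R * e23 R * e12 R = e23 R * e12 R * e23 R

/-- skew invertibility: `Tr₍₂₎(R₁₂ Ψ₂₃) = Tr₍₂₎(Ψ₁₂ R₂₃) = P₁₃` -/
def SkewPair (R Ψ : M2 m A) : Prop :=
  tr2of3 (e12 R * e23 Ψ) = permP m A ∧ tr2of3 (e12 Ψ * e23 R) = permP m A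

/-- `X` acting in the `i`-th of `k` factors -/
def op1At (k : ℕ) (X : M1 m A) (i : Fin k) : MN m k A :=
  Matrix.of fun a b =>
    X (a i) (b i) * (if ∀ l, l ≠ i → a l = b l then 1 else 0)

/-- `X` acting in the factor with (0-based) number `i` (junk = identity out of range) -/
def op1Nat (k : ℕ) (X : M1 m A) (i : ℕ) : MN m k A :=
  if h : i < k then op1At k X ⟨i, h⟩ else 1

/-- a two-factor operator acting in factors `i`, `j` of `k` factors -/
def op2At (k : ℕ) (X : M2 m A) (i j : Fin k) : MN m k A :=
  Matrix.of fun a b =>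
    X (a i, a j) (b i, b j) * (if ∀ l, l ≠ i → l ≠ j → a l = b l then 1 else 0)

/-- `X_{i+1}` : the two-factor operator acting in the (0-based) factors `i`, `i+1`
of `k` factors (junk = identity when out of range) -/
def RAt (k : ℕ) (X : M2 m A) (i : ℕ) : MN m k A :=
  if h : i + 1 < k then op2At k X ⟨i, Nat.lt_of_succ_lt h⟩ ⟨i + 1, h⟩ else 1

/-- extend an operator on `V^{⊗k}` by the identity in a new last factor -/
def extendOne {k : ℕ} (X : MN m k A) : MN m (k + 1) A :=
  Matrix.of fun a b => X (Fin.init a) (Fin.init b) * kd A (a (Fin.last k)) (b (Fin.last k))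

/-- partial trace over the last factor -/
def ptrLast {k : ℕ} (X : MN m (k + 1) A) : MN m k A :=
  Matrix.of fun a b => ∑ e : Fin m, X (Fin.snoc a e) (Fin.snoc b e)

/-- partial trace over the last `i` factors -/
def ptrLastN (k i : ℕ) (X : MN m (k + i) A) : MN m k A :=
  Matrix.of fun a b => ∑ t : Fin i → Fin m, X (Fin.append a t) (Fin.append b t)

/-- partial trace over the factors `2, …, k+1`, the result acting on the first factor -/
def ptrTail {k : ℕ} (X : MN m (k + 1) A) : M1 m A :=
  Matrix.of fun i j => ∑ t : Fin k → Fin m, X (Fin.cons i t) (Fin.cons j t)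

/-- `X₁ X₂ ⋯ X_j` (1-based labels) -/
def Rchain (K : ℕ) (X : M2 m A) : ℕ → MN m K A
  | 0 => 1
  | j + 1 => Rchain K X j * RAt K X j

/-- `X_j ⋯ X₂ X₁` (1-based labels) -/
def RchainRev (K : ℕ) (X : M2 m A) : ℕ → MN m K A
  | 0 => 1
  | j + 1 => RAt K X j * RchainRev K X j

/-- R-copies: `Lbar K R R' L j = L_{\overline{j+1}}`, i.e.
`L_{\overline 1} = L₁`, `L_{\overline{j+1}} = R_j L_{\overline j} R_j⁻¹` -/
def Lbar (K : ℕ) (R R' : M2 m A) (L : M1 m A) : ℕ → MN m K A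
  | 0 => op1Nat K L 0
  | j + 1 => RAt K R j * Lbar K R R' L j * RAt K R' j

/-- `Lunder K R R' L j = L_{\underline{j+1}}` -/
def Lunder (K : ℕ) (R R' : M2 m A) (L : M1 m A) : ℕ → MN m K A
  | 0 => op1Nat K L 0
  | j + 1 => RAt K R' j * Lunder K R R' L j * RAt K R j

/-- `L_{\overline 1} L_{\overline 2} ⋯ L_{\overline j}` -/
def LbarChain (K : ℕ) (R R' : M2 m A) (L : M1 m A) : ℕ → MN m K A
  | 0 => 1
  | j + 1 => LbarChain K R R' L j * Lbar K R R' L j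

/-- `L_{\underline j} ⋯ L_{\underline 2} L_{\underline 1}` -/
def LunderChainRev (K : ℕ) (R R' : M2 m A) (L : M1 m A) : ℕ → MN m K A
  | 0 => 1
  | j + 1 => Lunder K R R' L j * LunderChainRev K R R' L j

/-- `T₁ T₂ ⋯ T_j` -/
def opChain (K : ℕ) (T : M1 m A) : ℕ → MN m K A
  | 0 => 1
  | j + 1 => opChain K T j * op1Nat K T j

/-- Jucys–Murphy operators: `Jop K X j = J_{j+1}`, `J₁ = I`, `J_{j+1} = X_j J_j X_j` -/
def Jop (K : ℕ) (X : M2 m A) : ℕ → MN m K A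
  | 0 => 1
  | j + 1 => RAt K X j * Jop K X j * RAt K X j

/-- `J₁ J₂ ⋯ J_j` -/
def Jprod (K : ℕ) (X : M2 m A) : ℕ → MN m K A
  | 0 => 1
  | j + 1 => Jprod K X j * Jop K X j

/-- `Υ^{(j)}` : `Υ^{(0)} = Υ^{(1)} = 1`, `Υ^{(j+1)} = (X₁ ⋯ X_j) Υ^{(j)}` -/
def Ups (K : ℕ) (X : M2 m A) : ℕ → MN m K A
  | 0 => 1
  | j + 1 => Rchain K X j * Ups K X j

end ops

/-- `D₁ D₂ ⋯ D_k` on `V^{⊗k}` -/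
def DProdMat (m k : ℕ) (D : M1 m ℂ) : MN m k ℂ :=
  Matrix.of fun a b => ∏ i : Fin k, D (a i) (b i)

/-- `D_{i+1} ⋯ D_{2i}` on `V^{⊗2i}` -/
def DTailMat (m i : ℕ) (D : M1 m ℂ) : MN m (i + i) ℂ :=
  Matrix.of fun a b =>
    ∏ l : Fin (i + i), if i ≤ (l : ℕ) then D (a l) (b l) else kd ℂ (a l) (b l)

/-- the q-number `i_q = (q^i - q^{-i})/(q - q^{-1})` -/
noncomputable def qnum (q : ℂ) (i : ℕ) : ℂ := (q ^ i - q⁻¹ ^ i) / (q - q⁻¹)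

/-- Hecke condition `(R - q)(R + q⁻¹) = 0` -/
def IsHecke {m : ℕ} (R : M2 m ℂ) (q : ℂ) : Prop :=
  (R - q • 1) * (R + q⁻¹ • 1) = 0

/-- the antisymmetrizers `A^{(i)}` on `V^{⊗i}` -/
noncomputable def asym {m : ℕ} (R : M2 m ℂ) (q : ℂ) : (i : ℕ) → MN m i ℂ
  | 0 => 1
  | 1 => 1
  | i + 2 =>
    (qnum q (i + 1) / qnum q (i + 2)) •
      (extendOne (asym R q (i + 1)) *
        ((q ^ (i + 1) / qnum q (i + 1)) • (1 : MN m (i + 2) ℂ) - RAt (i + 2) R i) *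
        extendOne (asym R q (i + 1)))

/-- `R` is a `GL_q(n)`-type R-matrix: Hecke, `i_q ≠ 0` for `i = 2, …, n`,
`A^{(n)}((qⁿ/n_q)I − R_n)A^{(n)} = 0` on `V^{⊗(n+1)}`, and `rank A^{(n)} = 1`. -/
def IsGLqType {m : ℕ} (R : M2 m ℂ) (q : ℂ) (n : ℕ) : Prop :=
  q ≠ 0 ∧ IsHecke R q ∧ (∀ i, 2 ≤ i → i ≤ n → qnum q i ≠ 0) ∧
    extendOne (asym R q n) *
        ((q ^ n / qnum q n) • (1 : MN m (n + 1) ℂ) - RAt (n + 1) R (n - 1)) *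
        extendOne (asym R q n) = 0 ∧
    (asym R q n).rank = 1

/-- lift a complex matrix to a matrix over the ℂ-algebra `A` -/
def lft (A : Type*) [Ring A] [Algebra ℂ A] {ι : Type*} (X : Matrix ι ι ℂ) :
    Matrix ι ι A := X.map (algebraMap ℂ A)

/-- product of `f β` over all `β` satisfying `p` (in increasing order of `β`) -/
def listProd {α : Type*} [Monoid α] {n : ℕ} (p : Fin n → Bool) (f : Fin n → α) : α :=
  (((List.finRange n).filter p).map f).prod

/-- elementary symmetric function `e_i(μ₁,…,μ_n)` (ordered products) -/
def esym {A : Type*} [Semiring A] (n : ℕ) (μ : Fin n → A) (i : ℕ) : A :=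
  ∑ s ∈ Finset.univ.powersetCard i, ((Finset.sort s (· ≤ ·)).map μ).prod

/-- the spectral projector built from a matrix `L`:
`∏_{β ≠ α} (L - c μ_β I) (c (μ_α - μ_β))⁻¹`, where `ν α β` stands for `(μ_α - μ_β)⁻¹` -/
noncomputable def projGen {m n : ℕ} {A : Type*} [Ring A] [Algebra ℂ A] (c : ℂ)
    (L : M1 m A) (μ : Fin n → A) (ν : Fin n → Fin n → A) (α : Fin n) : M1 m A :=
  listProd (fun β => decide (β ≠ α))
    (fun β => (L - Matrix.diagonal fun _ => c • μ β) * Matrix.diagonal fun _ => c⁻¹ • ν α β)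

/-- `ch`-type element `Tr_{(1..i)}(D₁⋯D_i · A^{(i)} · L_{\bar1}⋯L_{\bar i})` -/
noncomputable def chElem {m : ℕ} (D : M1 m ℂ) (Rc : M2 m ℂ) (q : ℂ) {A : Type*}
    [Ring A] [Algebra ℂ A] (Rl Rl' : M2 m A) (L : M1 m A) (i : ℕ) : A :=
  Matrix.trace (lft A (DProdMat m i D) * lft A (asym Rc q i) * LbarChain i Rl Rl' L i)

end QCB

namespace QCBaux
open QCB Matrix
variable {m : ℕ}

abbrev F4 (m : ℕ) := Fin m × Fin m × Fin m × Fin m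
abbrev F6 (m : ℕ) := Fin m × Fin m × Fin m × Fin m × Fin m × Fin m

lemma e12_mul (X Y : M2 m ℂ) : e12 (X * Y) = e12 X * e12 Y := by
  ext ⟨p₁, p₂, p₃⟩ ⟨q₁, q₂, q₃⟩
  simp [e12, Matrix.mul_apply, kd, Fintype.sum_prod_type, Finset.sum_mul, Finset.mul_sum,
    mul_ite, ite_mul, Finset.sum_ite_eq, Finset.sum_ite_eq']

lemma e23_mul (X Y : M2 m ℂ) : e23 (X * Y) = e23 X * e23 Y := by
  ext ⟨p₁, p₂, p₃⟩ ⟨q₁, q₂, q₃⟩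
  simp [e23, Matrix.mul_apply, kd, Fintype.sum_prod_type, Finset.sum_mul, Finset.mul_sum,
    mul_ite, ite_mul, Finset.sum_ite_eq, Finset.sum_ite_eq']

lemma e12_one : e12 (1 : M2 m ℂ) = 1 := by
  ext ⟨p₁, p₂, p₃⟩ ⟨q₁, q₂, q₃⟩
  simp only [e12, Matrix.one_apply, kd, Prod.ext_iff, ite_and, Matrix.of_apply]
  split_ifs <;> simp_all

lemma e23_one : e23 (1 : M2 m ℂ) = 1 := by
  ext ⟨p₁, p₂, p₃⟩ ⟨q₁, q₂, q₃⟩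
  simp only [e23, Matrix.one_apply, kd, Prod.ext_iff, ite_and, Matrix.of_apply]
  split_ifs <;> simp_all

lemma sum_swap13 {α : Type*} [AddCommMonoid α] (F : Fin m → Fin m → Fin m → α) :
    (∑ a, ∑ b, ∑ c, F a b c) = ∑ c, ∑ b, ∑ a, F a b c := by
  calc (∑ a, ∑ b, ∑ c, F a b c) = ∑ b, ∑ a, ∑ c, F a b c := Finset.sum_comm
    _ = ∑ b, ∑ c, ∑ a, F a b c := Finset.sum_congr rfl fun _ _ => Finset.sum_comm
    _ = ∑ c, ∑ b, ∑ a, F a b c := Finset.sum_comm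

lemma triple121 (X Y Z : M2 m ℂ) (i d e k l f : Fin m) :
    (e12 X * e23 Y * e12 Z) (i, d, e) (k, l, f)
      = ∑ a, ∑ b, ∑ c, X (i, d) (a, b) * Y (b, e) (c, f) * Z (a, c) (k, l) := by
  simp [e12, e23, Matrix.mul_apply, kd, Fintype.sum_prod_type, Finset.sum_mul, Finset.mul_sum,
    mul_ite, ite_mul, Finset.sum_ite_eq, Finset.sum_ite_eq', mul_assoc]
  exact Finset.sum_congr rfl fun x _ => Finset.sum_comm

lemma triple232 (X Y Z : M2 m ℂ) (i d e k l f : Fin m) :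
    (e23 X * e12 Y * e23 Z) (i, d, e) (k, l, f)
      = ∑ a, ∑ b, ∑ c, X (d, e) (a, b) * Y (i, a) (k, c) * Z (c, b) (l, f) := by
  simp [e12, e23, Matrix.mul_apply, kd, Fintype.sum_prod_type, Finset.sum_mul, Finset.mul_sum,
    mul_ite, ite_mul, Finset.sum_ite_eq, Finset.sum_ite_eq', mul_assoc]
  exact sum_swap13 (fun a b c => X (d, e) (c, b) * (Y (i, c) (k, a) * Z (a, b) (l, f)))

lemma S1c (R Ψ : M2 m ℂ) (h : tr2of3 (e12 R * e23 Ψ) = permP m ℂ) :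
    ∀ x y u v, (∑ b, ∑ c, R (x, b) (y, c) * Ψ (c, u) (b, v)) = kd ℂ x v * kd ℂ u y := by
  intro x y u v
  have hc : tr2of3 (e12 R * e23 Ψ) (x, u) (y, v) = permP m ℂ (x, u) (y, v) := by rw [h]
  simpa [tr2of3, e12, e23, permP, Matrix.mul_apply, kd, Fintype.sum_prod_type,
    mul_ite, ite_mul, Finset.sum_ite_eq, Finset.sum_ite_eq'] using hc

lemma S2c (R Ψ : M2 m ℂ) (h : tr2of3 (e12 Ψ * e23 R) = permP m ℂ) :
    ∀ x y u v, (∑ b, ∑ c, Ψ (x, b) (y, c) * R (c, u) (b, v)) = kd ℂ x v * kd ℂ u y := by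
  intro x y u v
  have hc : tr2of3 (e12 Ψ * e23 R) (x, u) (y, v) = permP m ℂ (x, u) (y, v) := by rw [h]
  simpa [tr2of3, e12, e23, permP, Matrix.mul_apply, kd, Fintype.sum_prod_type,
    mul_ite, ite_mul, Finset.sum_ite_eq, Finset.sum_ite_eq'] using hc

lemma invc (S T : M2 m ℂ) (h : S * T = 1) :
    ∀ i d k l, (∑ a, ∑ u, S (i, d) (a, u) * T (a, u) (k, l)) = kd ℂ i k * kd ℂ d l := by
  intro i d k l
  have hc : (S * T) (i, d) (k, l) = (1 : M2 m ℂ) (i, d) (k, l) := by rw [h]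
  simp only [Matrix.mul_apply, Fintype.sum_prod_type] at hc
  rw [hc, Matrix.one_apply]
  by_cases h1 : i = k <;> by_cases h2 : d = l <;> simp [kd, h1, h2, Prod.ext_iff]

lemma BAstep (R Ψ : M2 m ℂ)
    (hS2 : ∀ x y u v, (∑ b, ∑ c, Ψ (x, b) (y, c) * R (c, u) (b, v)) = kd ℂ x v * kd ℂ u y)
    (G : Fin m → Fin m → ℂ) (w : ℂ)
    (h : ∀ i k, (∑ a, ∑ c, G a c * R (i, a) (k, c)) = kd ℂ i k * w) :
    ∀ a c, G a c = w * ∑ u, Ψ (c, u) (a, u) := by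
  intro a c
  calc G a c
      = ∑ a', ∑ c', G a' c' * (kd ℂ c c' * kd ℂ a' a) := by
        simp [kd, mul_ite, ite_mul, Finset.sum_ite_eq, Finset.sum_ite_eq']
    _ = ∑ a', ∑ c', G a' c' * (∑ i, ∑ k, Ψ (c, i) (a, k) * R (k, a') (i, c')) := by
        simp only [← hS2]
    _ = ∑ x : F4 m, G x.1 x.2.1 * (Ψ (c, x.2.2.1) (a, x.2.2.2) * R (x.2.2.2, x.1) (x.2.2.1, x.2.1)) := by
        simp [Fintype.sum_prod_type, Finset.mul_sum]
    _ = ∑ y : F4 m, Ψ (c, y.1) (a, y.2.1) * (G y.2.2.1 y.2.2.2 * R (y.2.1, y.2.2.1) (y.1, y.2.2.2)) :=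
        Fintype.sum_equiv ⟨fun x => (x.2.2.1, x.2.2.2, x.1, x.2.1),
          fun y => (y.2.2.1, y.2.2.2, y.1, y.2.1), fun x => rfl, fun y => rfl⟩ _ _
          (fun x => by simp only [Equiv.coe_fn_mk]; ring)
    _ = ∑ i, ∑ k, Ψ (c, i) (a, k) * (∑ a', ∑ c', G a' c' * R (k, a') (i, c')) := by
        simp [Fintype.sum_prod_type, Finset.mul_sum]
    _ = ∑ i, ∑ k, Ψ (c, i) (a, k) * (kd ℂ k i * w) := by
        simp only [h]
    _ = w * ∑ u, Ψ (c, u) (a, u) := by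
        simp [kd, mul_ite, ite_mul, Finset.sum_ite_eq, Finset.sum_ite_eq', Finset.mul_sum]
        exact Finset.sum_congr rfl fun u _ => by ring

lemma key (R Ψ S T T' S' : M2 m ℂ)
    (hS1 : ∀ x y u v, (∑ b, ∑ c, R (x, b) (y, c) * Ψ (c, u) (b, v)) = kd ℂ x v * kd ℂ u y)
    (hS2 : ∀ x y u v, (∑ b, ∑ c, Ψ (x, b) (y, c) * R (c, u) (b, v)) = kd ℂ x v * kd ℂ u y)
    (hST : ∀ i d k l, (∑ a, ∑ u, S (i, d) (a, u) * T (a, u) (k, l)) = kd ℂ i k * kd ℂ d l)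
    (hY : ∀ i d e k l f, (∑ a, ∑ b, ∑ c, S (i, d) (a, b) * R (b, e) (c, f) * T (a, c) (k, l))
        = ∑ a, ∑ b, ∑ c, T' (d, e) (a, b) * R (i, a) (k, c) * S' (c, b) (l, f)) :
    ∀ d l a c, (∑ e, ∑ f, ∑ b, (∑ u, Ψ (f, u) (e, u)) * T' (d, e) (a, b) * S' (c, b) (l, f))
        = kd ℂ d l * ∑ u, Ψ (c, u) (a, u) := by
  intro d l
  refine BAstep R Ψ hS2 _ _ (fun i k => ?_)
  calc (∑ a, ∑ c, (∑ e, ∑ f, ∑ b, (∑ u, Ψ (f, u) (e, u)) * T' (d, e) (a, b) * S' (c, b) (l, f))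
        * R (i, a) (k, c))
      = ∑ x : F6 m, Ψ (x.2.2.2.1, x.2.2.2.2.2) (x.2.2.1, x.2.2.2.2.2)
          * T' (d, x.2.2.1) (x.1, x.2.2.2.2.1) * S' (x.2.1, x.2.2.2.2.1) (l, x.2.2.2.1)
          * R (i, x.1) (k, x.2.1) := by
        simp [Fintype.sum_prod_type, Finset.sum_mul, Finset.mul_sum]
    _ = ∑ y : F6 m, Ψ (y.2.1, y.2.2.1) (y.1, y.2.2.1)
          * (T' (d, y.1) (y.2.2.2.1, y.2.2.2.2.1) * R (i, y.2.2.2.1) (k, y.2.2.2.2.2)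
            * S' (y.2.2.2.2.2, y.2.2.2.2.1) (l, y.2.1)) :=
        Fintype.sum_equiv ⟨fun x => (x.2.2.1, x.2.2.2.1, x.2.2.2.2.2, x.1, x.2.2.2.2.1, x.2.1),
          fun y => (y.2.2.2.1, y.2.2.2.2.2, y.1, y.2.1, y.2.2.2.2.1, y.2.2.1),
          fun x => rfl, fun y => rfl⟩ _ _
          (fun x => by simp only [Equiv.coe_fn_mk]; ring)
    _ = ∑ e, ∑ f, ∑ u, Ψ (f, u) (e, u)
          * (∑ a, ∑ b, ∑ c, T' (d, e) (a, b) * R (i, a) (k, c) * S' (c, b) (l, f)) := by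
        simp [Fintype.sum_prod_type, Finset.mul_sum]
    _ = ∑ e, ∑ f, ∑ u, Ψ (f, u) (e, u)
          * (∑ a, ∑ b, ∑ c, S (i, d) (a, b) * R (b, e) (c, f) * T (a, c) (k, l)) := by
        simp only [← hY]
    _ = ∑ x : F6 m, Ψ (x.2.1, x.2.2.1) (x.1, x.2.2.1)
          * (S (i, d) (x.2.2.2.1, x.2.2.2.2.1) * R (x.2.2.2.2.1, x.1) (x.2.2.2.2.2, x.2.1)
            * T (x.2.2.2.1, x.2.2.2.2.2) (k, l)) := by
        simp [Fintype.sum_prod_type, Finset.mul_sum]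
    _ = ∑ y : F6 m, S (i, d) (y.1, y.2.1)
          * ((R (y.2.1, y.2.2.2.2.1) (y.2.2.1, y.2.2.2.2.2) * Ψ (y.2.2.2.2.2, y.2.2.2.1) (y.2.2.2.2.1, y.2.2.2.1))
            * T (y.1, y.2.2.1) (k, l)) :=
        Fintype.sum_equiv ⟨fun x => (x.2.2.2.1, x.2.2.2.2.1, x.2.2.2.2.2, x.2.2.1, x.1, x.2.1),
          fun y => (y.2.2.2.2.1, y.2.2.2.2.2, y.2.2.2.1, y.1, y.2.1, y.2.2.1),
          fun x => rfl, fun y => rfl⟩ _ _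
          (fun x => by simp only [Equiv.coe_fn_mk]; ring)
    _ = ∑ a, ∑ b, ∑ c, ∑ u, S (i, d) (a, b)
          * ((∑ e, ∑ f, R (b, e) (c, f) * Ψ (f, u) (e, u)) * T (a, c) (k, l)) := by
        simp [Fintype.sum_prod_type, Finset.mul_sum, Finset.sum_mul]
    _ = ∑ a, ∑ b, ∑ c, ∑ u, S (i, d) (a, b) * ((kd ℂ b u * kd ℂ u c) * T (a, c) (k, l)) := by
        simp only [hS1]
    _ = ∑ a, ∑ u, S (i, d) (a, u) * T (a, u) (k, l) := by
        simp [kd, mul_ite, ite_mul, Finset.sum_ite_eq, Finset.sum_ite_eq']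
    _ = kd ℂ i k * kd ℂ d l := hST i d k l

end QCBaux

namespace QCBaux
open QCB Matrix
variable {m : ℕ}

lemma hYA (R R' : M2 m ℂ) (hbraid : IsBraid R) (hRR' : R * R' = 1) (hR'R : R' * R = 1) :
    e12 R' * e23 R * e12 R = e23 R * e12 R * e23 R' := by
  have hb : e12 R * e23 R * e12 R = e23 R * e12 R * e23 R := hbraid
  have c1 : ∀ X : M3 m ℂ, e12 R' * (e12 R * X) = X := fun X => by
    rw [← mul_assoc, ← e12_mul, hR'R, e12_one, one_mul]
  have c2 : e23 R * e23 R' = (1 : M3 m ℂ) := by rw [← e23_mul, hRR', e23_one]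
  have h := congrArg (fun X : M3 m ℂ => e12 R' * X * e23 R') hb
  simp only [mul_assoc, c1, c2, mul_one] at h
  simpa [mul_assoc] using h.symm

lemma hYB (R R' : M2 m ℂ) (hbraid : IsBraid R) (hRR' : R * R' = 1) (hR'R : R' * R = 1) :
    e12 R * e23 R * e12 R' = e23 R' * e12 R * e23 R := by
  have hb : e12 R * e23 R * e12 R = e23 R * e12 R * e23 R := hbraid
  have c3 : e12 R * e12 R' = (1 : M3 m ℂ) := by rw [← e12_mul, hRR', e12_one]
  have c4 : ∀ X : M3 m ℂ, e23 R' * (e23 R * X) = X := fun X => by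
    rw [← mul_assoc, ← e23_mul, hR'R, e23_one, one_mul]
  have h := congrArg (fun X : M3 m ℂ => e23 R' * X * e12 R') hb
  simp only [mul_assoc, c4, c3, mul_one] at h
  simpa [mul_assoc] using h.symm

/-- the `ε = +1` R-trace identity, component form -/
lemma star_plus (R R' Ψ : M2 m ℂ) (hbraid : IsBraid R) (hRR' : R * R' = 1)
    (hR'R : R' * R = 1) (hskew : SkewPair R Ψ) :
    ∀ d l a c, (∑ e, ∑ f, ∑ b, (∑ u, Ψ (f, u) (e, u)) * R (d, e) (a, b) * R' (c, b) (l, f))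
        = kd ℂ d l * ∑ u, Ψ (c, u) (a, u) := by
  refine key R Ψ R' R R R' (S1c R Ψ hskew.1) (S2c R Ψ hskew.2) (invc R' R hR'R) ?_
  intro i d e k l f
  rw [← triple121 R' R R, ← triple232 R R R', hYA R R' hbraid hRR' hR'R]

/-- the `ε = -1` R-trace identity, component form -/
lemma star_minus (R R' Ψ : M2 m ℂ) (hbraid : IsBraid R) (hRR' : R * R' = 1)
    (hR'R : R' * R = 1) (hskew : SkewPair R Ψ) :
    ∀ d l a c, (∑ e, ∑ f, ∑ b, (∑ u, Ψ (f, u) (e, u)) * R' (d, e) (a, b) * R (c, b) (l, f))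
        = kd ℂ d l * ∑ u, Ψ (c, u) (a, u) := by
  refine key R Ψ R R' R' R (S1c R Ψ hskew.1) (S2c R Ψ hskew.2) (invc R R' hRR') ?_
  intro i d e k l f
  rw [← triple121 R R R', ← triple232 R' R R, hYB R R' hbraid hRR' hR'R]

end QCBaux

namespace QCBaux
open QCB Matrix
variable {m : ℕ}

abbrev F5 (m : ℕ) := Fin m × Fin m × Fin m × Fin m × Fin m

lemma entry_formula {A : Type*} [Ring A] [Algebra ℂ A] (Dm : M1 m ℂ) (Rl Rr : M2 m ℂ)
    (Y : M1 m A) (i j : Fin m) :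
    tr2of2 (f2 (lft A Dm) * lft A Rl * f1 Y * lft A Rr) i j
      = ∑ k, ∑ p, algebraMap ℂ A
          (∑ dd, ∑ b, ∑ ll, Dm b dd * Rl (i, dd) (k, ll) * Rr (p, ll) (j, b)) * Y k p := by
  calc tr2of2 (f2 (lft A Dm) * lft A Rl * f1 Y * lft A Rr) i j
      = ∑ x : F5 m, algebraMap ℂ A (Dm x.1 x.2.2.2.1)
          * (algebraMap ℂ A (Rl (i, x.2.2.2.1) (x.2.2.2.2, x.2.2.1))
            * (Y x.2.2.2.2 x.2.1 * algebraMap ℂ A (Rr (x.2.1, x.2.2.1) (j, x.1)))) := by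
        simp [tr2of2, f1, f2, lft, Matrix.mul_apply, kd, Fintype.sum_prod_type,
          Finset.sum_mul, Finset.mul_sum, mul_ite, ite_mul, Finset.sum_ite_eq,
          Finset.sum_ite_eq', Matrix.map_apply, mul_assoc]
    _ = ∑ y : F5 m, algebraMap ℂ A (Dm y.2.2.2.1 y.2.2.1)
          * (algebraMap ℂ A (Rl (i, y.2.2.1) (y.1, y.2.2.2.2))
            * (algebraMap ℂ A (Rr (y.2.1, y.2.2.2.2) (j, y.2.2.2.1)) * Y y.1 y.2.1)) :=
        Fintype.sum_equiv ⟨fun x => (x.2.2.2.2, x.2.1, x.2.2.2.1, x.1, x.2.2.1),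
          fun y => (y.2.2.2.1, y.2.1, y.2.2.2.2, y.2.2.1, y.1),
          fun x => rfl, fun y => rfl⟩ _ _
          (fun x => by simp only [Equiv.coe_fn_mk]; rw [← Algebra.commutes])
    _ = ∑ k, ∑ p, algebraMap ℂ A
          (∑ dd, ∑ b, ∑ ll, Dm b dd * Rl (i, dd) (k, ll) * Rr (p, ll) (j, b)) * Y k p := by
        simp [Fintype.sum_prod_type, map_sum, _root_.map_mul, Finset.sum_mul, mul_assoc]

end QCBaux


open QCB Matrix

/-- The R-trace property `Tr₍₂₎(D₂ R^ε Y₁ R^{-ε}) = Tr_R(Y)·I` for matrices `Y` over a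
ℂ-algebra `𝔄`, for both signs `ε = ±1`. -/
theorem statement1 {m : ℕ} (hm : 1 ≤ m) (R R' Ψ : M2 m ℂ)
    (hbraid : IsBraid R) (hRR' : R * R' = 1) (hR'R : R' * R = 1)
    (hskew : SkewPair R Ψ)
    (A : Type*) [Ring A] [Algebra ℂ A] (Y : M1 m A) :
    tr2of2 (f2 (lft A (Dmat Ψ)) * lft A R * f1 Y * lft A R') =
      Matrix.diagonal
        (fun _ => ∑ i : Fin m, ∑ j : Fin m, algebraMap ℂ A (Dmat Ψ j i) * Y i j) ∧
    tr2of2 (f2 (lft A (Dmat Ψ)) * lft A R' * f1 Y * lft A R) =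
      Matrix.diagonal
        (fun _ => ∑ i : Fin m, ∑ j : Fin m, algebraMap ℂ A (Dmat Ψ j i) * Y i j) := by
  have hDm : ∀ p q : Fin m, Dmat Ψ p q = ∑ u, Ψ (p, u) (q, u) := fun p q => rfl
  constructor
  · ext i j
    rw [QCBaux.entry_formula]
    have h2 : ∀ k p : Fin m,
        (∑ dd, ∑ b, ∑ ll, Dmat Ψ b dd * R (i, dd) (k, ll) * R' (p, ll) (j, b))
          = kd ℂ i j * Dmat Ψ p k := by
      intro k p
      simpa [← hDm] using QCBaux.star_plus R R' Ψ hbraid hRR' hR'R hskew i j k p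
    simp only [h2]
    rcases eq_or_ne i j with h | h
    · simp [h, kd]
    · simp [h, kd, Matrix.diagonal_apply_ne _ h]
  · ext i j
    rw [QCBaux.entry_formula]
    have h2 : ∀ k p : Fin m,
        (∑ dd, ∑ b, ∑ ll, Dmat Ψ b dd * R' (i, dd) (k, ll) * R (p, ll) (j, b))
          = kd ℂ i j * Dmat Ψ p k := by
      intro k p
      simpa [← hDm] using QCBaux.star_minus R R' Ψ hbraid hRR' hR'R hskew i j k p
    simp only [h2]
    rcases eq_or_ne i j with h | h
    · simp [h, kd]
    · simp [h, kd, Matrix.diagonal_apply_ne _ h]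
end

section
/- Let R be an invertible operator on V⊗V satisfying the braid relation, 𝔄 a unital associative ℂ-algebra, and L an m×m matrix over 𝔄 satisfying the reflection equation L₁R₁₂L₁R₁₂ = R₁₂L₁R₁₂L₁. Then for every k ≥ 1 the two products of R-copies coincide: L_{\bar1}L_{\bar2}⋯L_{\bar k} = L_{\underline k}⋯L_{\underline 2}L_{\underline 1} as matrices over 𝔄 indexed by k-tuples. -/
open QCB Matrix

section Auxiliary

open QCB Matrix

section AbstractCalc
variable {M : Type*} [Monoid M]

/-- reflection-equation transport step -/
lemma QCB.re_step {a a' b b' u : M}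
    (haa' : a * a' = 1) (ha'a : a' * a = 1) (hbb' : b * b' = 1) (hb'b : b' * b = 1)
    (hbr : a * b * a = b * a * b)
    (hub : u * b = b * u) (hub' : u * b' = b' * u)
    (ih : u * a * u * a = a * u * a * u) :
    (a' * u * a) * b * (a' * u * a) * b = b * (a' * u * a) * b * (a' * u * a) := by
  have e1 : a * b * a * a' = b * a * b * a' := congrArg (· * a') hbr
  have e2 : a * b = b * a * b * a' := by
    rw [← e1, mul_assoc (a * b) a a', haa', mul_one]
  have id1 : a * b * a' = b' * a * b := by
    have e3 := congrArg (fun z => b' * z) e2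
    simp only [mul_assoc] at e3 ⊢
    rw [e3, ← mul_assoc b' b, hb'b, one_mul]
  have id2 : b * a' * b' = a' * b' * a := by
    have e4 := congrArg (fun z => a' * z) id1
    simp only [mul_assoc] at e4
    rw [← mul_assoc, ha'a, one_mul] at e4
    have e5 : b * a' * b' = a' * (b' * (a * b)) * b' := congrArg (· * b') e4
    rw [e5]
    simp only [mul_assoc]
    rw [hbb', mul_one]
  have W1 : ∀ x : M, a * (b * (a' * x)) = b' * (a * (b * x)) := fun x => by
    simp only [← mul_assoc]; exact congrArg (· * x) id1
  have W2 : ∀ x : M, b * (a' * (b' * x)) = a' * (b' * (a * x)) := fun x => by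
    simp only [← mul_assoc]; exact congrArg (· * x) id2
  have W3 : ∀ x : M, u * (b' * x) = b' * (u * x) := fun x => by
    simp only [← mul_assoc]; exact congrArg (· * x) hub'
  have W4 : ∀ x : M, b * (u * x) = u * (b * x) := fun x => by
    simp only [← mul_assoc]; exact congrArg (· * x) hub.symm
  have W5 : ∀ x : M, b * (a * (b * x)) = a * (b * (a * x)) := fun x => by
    simp only [← mul_assoc]; exact congrArg (· * x) hbr.symm
  have W6 : ∀ x : M, u * (a * (u * (a * x))) = a * (u * (a * (u * x))) := fun x => by
    simp only [← mul_assoc]; exact congrArg (· * x) ih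
  have main : a' * (u * (a * (b * (a' * (u * (a * (b * (1:M)))))))) =
      b * (a' * (u * (a * (b * (a' * (u * (a * (1:M)))))))) := by
    conv_lhs => rw [W1, W3, W4, W5, W6]
    conv_rhs => rw [W1, W3, W2, W4]
  simpa only [mul_assoc, mul_one] using main

lemma QCB.e1_of_re {a a' u : M} (haa' : a * a' = 1) (ha'a : a' * a = 1)
    (hre : u * a * u * a = a * u * a * u) :
    a' * u * a * u = u * a * u * a' := by
  have h1 : u * a * u = a * u * a * u * a' := by
    rw [← hre, mul_assoc (u * a * u) a a', haa', mul_one]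
  have h1' : u * (a * u) = a * (u * (a * (u * a'))) := by
    simpa only [mul_assoc] using h1
  simp only [mul_assoc]
  rw [h1', ← mul_assoc, ha'a, one_mul]

lemma QCB.i_step {a a' u D bb : M}
    (hDa : D * a = a * D) (hDa' : D * a' = a' * D)
    (hIj : D * bb = u * D)
    (hE1 : a' * u * a * u = u * a * u * a') :
    (u * D) * (a * bb * a') = (a' * u * a) * (u * D) := by
  have TDa : ∀ x : M, D * (a * x) = a * (D * x) := fun x => by
    simp only [← mul_assoc]; exact congrArg (· * x) hDa
  have TDa' : ∀ x : M, D * (a' * x) = a' * (D * x) := fun x => by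
    simp only [← mul_assoc]; exact congrArg (· * x) hDa'
  have THj : ∀ x : M, D * (bb * x) = u * (D * x) := fun x => by
    simp only [← mul_assoc]; exact congrArg (· * x) hIj
  have TE1 : ∀ x : M, u * (a * (u * (a' * x))) = a' * (u * (a * (u * x))) := fun x => by
    simp only [← mul_assoc]; exact congrArg (· * x) hE1.symm
  have main : u * (D * (a * (bb * (a' * (1:M))))) = a' * (u * (a * (u * (D * (1:M))))) := by
    conv_lhs => rw [TDa, THj, TDa', TE1]
  simpa only [mul_assoc, mul_one] using main

end AbstractCalc

namespace QCB

variable {m k : ℕ} {A : Type*} [Semiring A]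

/-! ### window embeddings -/

def splitPair (i j : Fin k) (hij : i ≠ j) :
    (Fin k → Fin m) ≃ (Fin m × Fin m) × ({l : Fin k // l ≠ i ∧ l ≠ j} → Fin m) where
  toFun a := ((a i, a j), fun l => a l.1)
  invFun x l := if h : l = i then x.1.1 else if h' : l = j then x.1.2 else x.2 ⟨l, h, h'⟩
  left_inv a := by
    funext l
    by_cases h : l = i
    · subst h; simp
    · by_cases h' : l = j
      · subst h'; simp [h]
      · simp [h, h']
  right_inv x := by
    obtain ⟨⟨x1, x2⟩, r⟩ := x
    refine Prod.ext (Prod.ext ?_ ?_) (funext fun l => ?_)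
    · simp
    · simp [hij.symm]
    · simp [l.2.1, l.2.2]

def pmat (i j : Fin k) (hij : i ≠ j) (X : M2 m A) : MN m k A :=
  (blockDiagonal fun _ : {l : Fin k // l ≠ i ∧ l ≠ j} → Fin m => X).submatrix
    (splitPair i j hij) (splitPair i j hij)

lemma pmat_apply (i j : Fin k) (hij : i ≠ j) (X : M2 m A) (a b : Fin k → Fin m) :
    pmat i j hij X a b =
      if (∀ l, l ≠ i → l ≠ j → a l = b l) then X (a i, a j) (b i, b j) else 0 := by
  simp only [pmat, submatrix_apply, blockDiagonal_apply, splitPair, Equiv.coe_fn_mk]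
  by_cases h : ∀ l, l ≠ i → l ≠ j → a l = b l
  · rw [if_pos h, if_pos]; funext l; exact h l.1 l.2.1 l.2.2
  · rw [if_neg h, if_neg]
    intro hc; exact h fun l h1 h2 => congrFun hc ⟨l, h1, h2⟩

lemma pmat_mul (i j : Fin k) (hij : i ≠ j) (X Y : M2 m A) :
    pmat i j hij X * pmat i j hij Y = pmat i j hij (X * Y) := by
  unfold pmat
  rw [submatrix_mul_equiv, ← blockDiagonal_mul]

lemma pmat_one (i j : Fin k) (hij : i ≠ j) :
    pmat i j hij (1 : M2 m A) = 1 := by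
  unfold pmat
  rw [show (fun _ : {l : Fin k // l ≠ i ∧ l ≠ j} → Fin m => (1 : M2 m A)) = 1 from rfl,
    blockDiagonal_one, submatrix_one_equiv]

def splitTriple (i j l : Fin k) (hij : i ≠ j) (hil : i ≠ l) (hjl : j ≠ l) :
    (Fin k → Fin m) ≃ (Fin m × Fin m × Fin m) × ({t : Fin k // t ≠ i ∧ t ≠ j ∧ t ≠ l} → Fin m)
    where
  toFun a := ((a i, a j, a l), fun t => a t.1)
  invFun x t :=
    if h : t = i then x.1.1 else if h' : t = j then x.1.2.1
    else if h'' : t = l then x.1.2.2 else x.2 ⟨t, h, h', h''⟩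
  left_inv a := by
    funext t
    by_cases h : t = i
    · subst h; simp
    · by_cases h' : t = j
      · subst h'; simp [h]
      · by_cases h'' : t = l
        · subst h''; simp [h, h']
        · simp [h, h', h'']
  right_inv x := by
    obtain ⟨⟨x1, x2, x3⟩, r⟩ := x
    refine Prod.ext (Prod.ext ?_ (Prod.ext ?_ ?_)) (funext fun t => ?_)
    · simp
    · simp [hij.symm]
    · simp [hil.symm, hjl.symm]
    · simp [t.2.1, t.2.2.1, t.2.2.2]

def tmat (i j l : Fin k) (hij : i ≠ j) (hil : i ≠ l) (hjl : j ≠ l) (X : M3 m A) :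
    MN m k A :=
  (blockDiagonal fun _ : {t : Fin k // t ≠ i ∧ t ≠ j ∧ t ≠ l} → Fin m => X).submatrix
    (splitTriple i j l hij hil hjl) (splitTriple i j l hij hil hjl)

lemma tmat_apply (i j l : Fin k) (hij : i ≠ j) (hil : i ≠ l) (hjl : j ≠ l)
    (X : M3 m A) (a b : Fin k → Fin m) :
    tmat i j l hij hil hjl X a b =
      if (∀ t, t ≠ i → t ≠ j → t ≠ l → a t = b t) then
        X (a i, a j, a l) (b i, b j, b l) else 0 := by
  simp only [tmat, submatrix_apply, blockDiagonal_apply, splitTriple, Equiv.coe_fn_mk]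
  by_cases h : ∀ t, t ≠ i → t ≠ j → t ≠ l → a t = b t
  · rw [if_pos h, if_pos]; funext t; exact h t.1 t.2.1 t.2.2.1 t.2.2.2
  · rw [if_neg h, if_neg]
    intro hc; exact h fun t h1 h2 h3 => congrFun hc ⟨t, h1, h2, h3⟩

lemma tmat_mul (i j l : Fin k) (hij : i ≠ j) (hil : i ≠ l) (hjl : j ≠ l) (X Y : M3 m A) :
    tmat i j l hij hil hjl X * tmat i j l hij hil hjl Y = tmat i j l hij hil hjl (X * Y) := by
  unfold tmat
  rw [submatrix_mul_equiv, ← blockDiagonal_mul]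

/-! ### identification of the operators with window embeddings -/

lemma op2At_eq_pmat (i j : Fin k) (hij : i ≠ j) (X : M2 m A) :
    op2At k X i j = pmat i j hij X := by
  ext a b
  rw [pmat_apply]
  simp only [op2At, of_apply, mul_ite, mul_one, mul_zero]

lemma op2At_mul_same (i j : Fin k) (hij : i ≠ j) (X Y : M2 m A) :
    op2At k X i j * op2At k Y i j = op2At k (X * Y) i j := by
  rw [op2At_eq_pmat i j hij, op2At_eq_pmat i j hij, op2At_eq_pmat i j hij, pmat_mul]

lemma op2At_one (i j : Fin k) (hij : i ≠ j) :
    op2At k (1 : M2 m A) i j = 1 := by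
  rw [op2At_eq_pmat i j hij, pmat_one]

lemma op2At_eq_tmat12 (i j l : Fin k) (hij : i ≠ j) (hil : i ≠ l) (hjl : j ≠ l) (X : M2 m A) :
    op2At k X i j = tmat i j l hij hil hjl (e12 X) := by
  ext a b
  rw [tmat_apply]
  simp only [op2At, of_apply, e12, kd, mul_ite, mul_one, mul_zero]
  by_cases h1 : ∀ t, t ≠ i → t ≠ j → a t = b t
  · rw [if_pos h1, if_pos (fun t ht1 ht2 _ => h1 t ht1 ht2), if_pos (h1 l hil.symm hjl.symm)]
  · rw [if_neg h1]
    by_cases h2 : ∀ t, t ≠ i → t ≠ j → t ≠ l → a t = b t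
    · rw [if_pos h2, if_neg]
      intro hl
      exact h1 fun t ht1 ht2 => by
        by_cases htl : t = l
        · subst htl; exact hl
        · exact h2 t ht1 ht2 htl
    · rw [if_neg h2]

lemma op2At_eq_tmat23 (i j l : Fin k) (hij : i ≠ j) (hil : i ≠ l) (hjl : j ≠ l) (X : M2 m A) :
    op2At k X j l = tmat i j l hij hil hjl (e23 X) := by
  ext a b
  rw [tmat_apply]
  simp only [op2At, of_apply, e23, kd, mul_ite, mul_one, mul_zero, ite_mul, zero_mul, one_mul]
  by_cases h1 : ∀ t, t ≠ j → t ≠ l → a t = b t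
  · rw [if_pos h1, if_pos (fun t _ ht2 ht3 => h1 t ht2 ht3), if_pos (h1 i hij hil)]
  · rw [if_neg h1]
    by_cases h2 : ∀ t, t ≠ i → t ≠ j → t ≠ l → a t = b t
    · rw [if_pos h2, if_neg]
      intro hi
      exact h1 fun t ht2 ht3 => by
        by_cases hti : t = i
        · subst hti; exact hi
        · exact h2 t hti ht2 ht3
    · rw [if_neg h2]

lemma op1At_eq_op2At_f1 (t s : Fin k) (hts : t ≠ s) (L : M1 m A) :
    op1At k L t = op2At k (f1 L) t s := by
  ext a b
  simp only [op1At, op2At, f1, of_apply, kd, mul_ite, mul_one, mul_zero]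
  by_cases h1 : ∀ l, l ≠ t → a l = b l
  · rw [if_pos h1, if_pos (fun l hl _ => h1 l hl), if_pos (h1 s hts.symm)]
  · rw [if_neg h1]
    by_cases h2 : ∀ l, l ≠ t → l ≠ s → a l = b l
    · rw [if_pos h2, if_neg]
      intro hs
      exact h1 fun l hl => by
        by_cases hls : l = s
        · subst hls; exact hs
        · exact h2 l hl hls
    · rw [if_neg h2]

/-! ### products of disjointly supported operators -/

lemma op2At_mul_op2At_apply (X Y : M2 m A) (i j i' j' : Fin k)
    (hii' : i ≠ i') (hij' : i ≠ j') (hji' : j ≠ i') (hjj' : j ≠ j') (a b : Fin k → Fin m) :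
    (op2At k X i j * op2At k Y i' j') a b =
      X (a i, a j) (b i, b j) * Y (a i', a j') (b i', b j') *
        (if ∀ l, l ≠ i → l ≠ j → l ≠ i' → l ≠ j' → a l = b l then 1 else 0) := by
  rw [mul_apply]
  rw [Finset.sum_eq_single (fun l => if l = i ∨ l = j then b l else a l) ?h0 ?h1]
  case h0 =>
    intro c _ hc
    simp only [op2At, of_apply]
    by_cases h1 : ∀ l, l ≠ i → l ≠ j → a l = c l
    · have h2 : ¬ ∀ l, l ≠ i' → l ≠ j' → c l = b l := by
        intro h2
        apply hc
        funext l
        by_cases hl : l = i ∨ l = j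
        · rw [if_pos hl]
          rcases hl with hl | hl
          · subst hl; exact h2 l hii' hij'
          · subst hl; exact h2 l hji' hjj'
        · rw [if_neg hl]
          push_neg at hl
          exact (h1 l hl.1 hl.2).symm
      rw [if_neg h2, mul_zero, mul_zero]
    · rw [if_neg h1, mul_zero, zero_mul]
  case h1 => intro h; exact absurd (Finset.mem_univ _) h
  · simp only [op2At, of_apply]
    simp only [true_or, or_true, if_true]
    have e3 : (if i' = i ∨ i' = j then b i' else a i') = a i' :=
      if_neg (by rintro (h | h); exact hii' h.symm; exact hji' h.symm)
    have e4 : (if j' = i ∨ j' = j then b j' else a j') = a j' :=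
      if_neg (by rintro (h | h); exact hij' h.symm; exact hjj' h.symm)
    rw [e3, e4]
    rw [if_pos (fun l (h1 : l ≠ i) (h2 : l ≠ j) =>
      (if_neg (by rintro (h | h); exact h1 h; exact h2 h)).symm), mul_one]
    have hcond : (if (∀ l, l ≠ i' → l ≠ j' →
          (if l = i ∨ l = j then b l else a l) = b l) then (1:A) else 0)
        = (if ∀ l, l ≠ i → l ≠ j → l ≠ i' → l ≠ j' → a l = b l then 1 else 0) := by
      refine if_congr ⟨fun h l h1 h2 h3 h4 => ?_, fun h l h3 h4 => ?_⟩ rfl rfl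
      · have := h l h3 h4
        rwa [if_neg (by rintro (h' | h'); exact h1 h'; exact h2 h')] at this
      · by_cases hl : l = i ∨ l = j
        · rw [if_pos hl]
        · rw [if_neg hl]; push_neg at hl; exact h l hl.1 hl.2 h3 h4
    rw [hcond, mul_assoc]

lemma op1At_mul_op2At_apply (Lm : M1 m A) (Y : M2 m A) (t i j : Fin k)
    (hti : t ≠ i) (htj : t ≠ j) (a b : Fin k → Fin m) :
    (op1At k Lm t * op2At k Y i j) a b =
      Lm (a t) (b t) * Y (a i, a j) (b i, b j) *
        (if ∀ l, l ≠ t → l ≠ i → l ≠ j → a l = b l then 1 else 0) := by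
  rw [mul_apply]
  rw [Finset.sum_eq_single (fun l => if l = t then b l else a l) ?h0 ?h1]
  case h0 =>
    intro c _ hc
    simp only [op1At, op2At, of_apply]
    by_cases h1 : ∀ l, l ≠ t → a l = c l
    · have h2 : ¬ ∀ l, l ≠ i → l ≠ j → c l = b l := by
        intro h2
        apply hc
        funext l
        by_cases hl : l = t
        · rw [if_pos hl]; subst hl; exact h2 l hti htj
        · rw [if_neg hl]; exact (h1 l hl).symm
      rw [if_neg h2, mul_zero, mul_zero]
    · rw [if_neg h1, mul_zero, zero_mul]
  case h1 => intro h; exact absurd (Finset.mem_univ _) h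
  · simp only [op1At, op2At, of_apply, true_or, or_true, if_true]
    have e3 : (if i = t then b i else a i) = a i := if_neg (fun h => hti h.symm)
    have e4 : (if j = t then b j else a j) = a j := if_neg (fun h => htj h.symm)
    rw [e3, e4]
    rw [if_pos (fun l (h1 : l ≠ t) => (if_neg h1).symm), mul_one]
    have hcond : (if (∀ l, l ≠ i → l ≠ j → (if l = t then b l else a l) = b l) then (1:A) else 0)
        = (if ∀ l, l ≠ t → l ≠ i → l ≠ j → a l = b l then 1 else 0) := by
      refine if_congr ⟨fun h l h1 h2 h3 => ?_, fun h l h2 h3 => ?_⟩ rfl rfl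
      · have := h l h2 h3
        rwa [if_neg h1] at this
      · by_cases hl : l = t
        · rw [if_pos hl]
        · rw [if_neg hl]; exact h l hl h2 h3
    rw [hcond, mul_assoc]

lemma op2At_mul_op1At_apply (Lm : M1 m A) (Y : M2 m A) (t i j : Fin k)
    (hti : t ≠ i) (htj : t ≠ j) (a b : Fin k → Fin m) :
    (op2At k Y i j * op1At k Lm t) a b =
      Y (a i, a j) (b i, b j) * Lm (a t) (b t) *
        (if ∀ l, l ≠ t → l ≠ i → l ≠ j → a l = b l then 1 else 0) := by
  rw [mul_apply]
  rw [Finset.sum_eq_single (fun l => if l = i ∨ l = j then b l else a l) ?h0 ?h1]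
  case h0 =>
    intro c _ hc
    simp only [op1At, op2At, of_apply]
    by_cases h1 : ∀ l, l ≠ i → l ≠ j → a l = c l
    · have h2 : ¬ ∀ l, l ≠ t → c l = b l := by
        intro h2
        apply hc
        funext l
        by_cases hl : l = i ∨ l = j
        · rw [if_pos hl]
          exact h2 l (by rintro rfl; rcases hl with h | h; exact hti h; exact htj h)
        · rw [if_neg hl]; push_neg at hl; exact (h1 l hl.1 hl.2).symm
      rw [if_neg h2, mul_zero, mul_zero]
    · rw [if_neg h1, mul_zero, zero_mul]
  case h1 => intro h; exact absurd (Finset.mem_univ _) h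
  · simp only [op1At, op2At, of_apply]
    simp only [true_or, or_true, if_true]
    have e3 : (if t = i ∨ t = j then b t else a t) = a t :=
      if_neg (by rintro (h | h); exact hti h; exact htj h)
    rw [e3]
    rw [if_pos (fun l (h1 : l ≠ i) (h2 : l ≠ j) =>
      (if_neg (by rintro (h | h); exact h1 h; exact h2 h)).symm), mul_one]
    have hcond : (if (∀ l, l ≠ t → (if l = i ∨ l = j then b l else a l) = b l) then (1:A) else 0)
        = (if ∀ l, l ≠ t → l ≠ i → l ≠ j → a l = b l then 1 else 0) := by
      refine if_congr ⟨fun h l h1 h2 h3 => ?_, fun h l h1 => ?_⟩ rfl rfl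
      · have := h l h1
        rwa [if_neg (by rintro (h' | h'); exact h2 h'; exact h3 h')] at this
      · by_cases hl : l = i ∨ l = j
        · rw [if_pos hl]
        · rw [if_neg hl]; push_neg at hl; exact h l h1 hl.1 hl.2
    rw [hcond, mul_assoc]

lemma op2At_comm_disjoint (X Y : M2 m A) (i j i' j' : Fin k)
    (hii' : i ≠ i') (hij' : i ≠ j') (hji' : j ≠ i') (hjj' : j ≠ j')
    (hY : ∀ p q (x : A), Commute (Y p q) x) :
    op2At k X i j * op2At k Y i' j' = op2At k Y i' j' * op2At k X i j := by
  ext a b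
  rw [op2At_mul_op2At_apply X Y i j i' j' hii' hij' hji' hjj',
    op2At_mul_op2At_apply Y X i' j' i j hii'.symm hji'.symm hij'.symm hjj'.symm,
    (hY (a i', a j') (b i', b j') (X (a i, a j) (b i, b j))).eq]
  congr 1
  exact if_congr ⟨fun h l h1 h2 h3 h4 => h l h3 h4 h1 h2,
    fun h l h1 h2 h3 h4 => h l h3 h4 h1 h2⟩ rfl rfl

lemma op1At_comm_op2At (Lm : M1 m A) (Y : M2 m A) (t i j : Fin k)
    (hti : t ≠ i) (htj : t ≠ j)
    (hY : ∀ p q (x : A), Commute (Y p q) x) :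
    op1At k Lm t * op2At k Y i j = op2At k Y i j * op1At k Lm t := by
  ext a b
  rw [op1At_mul_op2At_apply Lm Y t i j hti htj,
    op2At_mul_op1At_apply Lm Y t i j hti htj,
    (hY (a i, a j) (b i, b j) (Lm (a t) (b t))).eq]

/-! ### RAt-level lemmas -/

lemma RAt_junk (X : M2 m A) (i : ℕ) (h : k ≤ i + 1) : RAt k X i = 1 :=
  dif_neg (by omega)

lemma fin_ne_of_ne {a b : ℕ} (h : a ≠ b) (ha : a < k) (hb : b < k) :
    (⟨a, ha⟩ : Fin k) ≠ ⟨b, hb⟩ := by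
  simp only [ne_eq, Fin.mk.injEq]; exact h

lemma RAt_mul (X Y : M2 m A) (i : ℕ) :
    RAt k X i * RAt k Y i = RAt k (X * Y) i := by
  unfold RAt
  by_cases h : i + 1 < k
  · rw [dif_pos h, dif_pos h, dif_pos h]
    exact op2At_mul_same _ _ (fin_ne_of_ne (by omega) _ _) X Y
  · rw [dif_neg h, dif_neg h, dif_neg h, one_mul]

lemma RAt_one (i : ℕ) : RAt k (1 : M2 m A) i = 1 := by
  unfold RAt
  by_cases h : i + 1 < k
  · rw [dif_pos h]
    exact op2At_one _ _ (fin_ne_of_ne (by omega) _ _)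
  · rw [dif_neg h]

lemma RAt_comm_far (X Y : M2 m A) (i j : ℕ) (hij : i + 2 ≤ j)
    (hY : ∀ p q (x : A), Commute (Y p q) x) :
    Commute (RAt k X i) (RAt k Y j) := by
  unfold RAt
  by_cases h1 : i + 1 < k
  · by_cases h2 : j + 1 < k
    · rw [dif_pos h1, dif_pos h2]
      exact op2At_comm_disjoint X Y _ _ _ _
        (fin_ne_of_ne (by omega) _ _) (fin_ne_of_ne (by omega) _ _)
        (fin_ne_of_ne (by omega) _ _) (fin_ne_of_ne (by omega) _ _) hY
    · rw [dif_neg h2]; exact Commute.one_right _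
  · rw [dif_neg h1]; exact Commute.one_left _

lemma op1Nat_comm_RAt (Lm : M1 m A) (Y : M2 m A)
    (hY : ∀ p q (x : A), Commute (Y p q) x) (i : ℕ) (hi : 1 ≤ i) :
    Commute (op1Nat k Lm 0) (RAt k Y i) := by
  unfold op1Nat RAt
  by_cases h0 : 0 < k
  · rw [dif_pos h0]
    by_cases h1 : i + 1 < k
    · rw [dif_pos h1]
      exact op1At_comm_op2At Lm Y _ _ _
        (fin_ne_of_ne (by omega) _ _) (fin_ne_of_ne (by omega) _ _) hY
    · rw [dif_neg h1]; exact Commute.one_right _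
  · rw [dif_neg h0]; exact Commute.one_left _

lemma RAt_braid (X : M2 m A)
    (hb : e12 X * e23 X * e12 X = e23 X * e12 X * e23 X) (i : ℕ) (h : i + 2 < k) :
    RAt k X i * RAt k X (i + 1) * RAt k X i
      = RAt k X (i + 1) * RAt k X i * RAt k X (i + 1) := by
  have h1 : i + 1 < k := by omega
  have h2 : i + 1 + 1 < k := by omega
  unfold RAt
  rw [dif_pos h1, dif_pos h2]
  have hij : (⟨i, by omega⟩ : Fin k) ≠ ⟨i + 1, h1⟩ := fin_ne_of_ne (by omega) _ _
  have hil : (⟨i, by omega⟩ : Fin k) ≠ ⟨i + 1 + 1, h2⟩ := fin_ne_of_ne (by omega) _ _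
  have hjl : (⟨i + 1, h1⟩ : Fin k) ≠ ⟨i + 1 + 1, h2⟩ := fin_ne_of_ne (by omega) _ _
  rw [op2At_eq_tmat12 ⟨i, by omega⟩ ⟨i + 1, h1⟩ ⟨i + 1 + 1, h2⟩ hij hil hjl X,
    op2At_eq_tmat23 ⟨i, by omega⟩ ⟨i + 1, h1⟩ ⟨i + 1 + 1, h2⟩ hij hil hjl X,
    tmat_mul, tmat_mul, tmat_mul, tmat_mul, hb]

end QCB

/-! ### lift lemmas -/

namespace QCB
variable {m : ℕ} {A : Type*} [Ring A] [Algebra ℂ A]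

lemma lft_mul {ι : Type*} [Fintype ι] (X Y : Matrix ι ι ℂ) :
    lft A (X * Y) = lft A X * lft A Y :=
  Matrix.map_mul (f := algebraMap ℂ A)

lemma lft_one {ι : Type*} [DecidableEq ι] : lft A (1 : Matrix ι ι ℂ) = 1 :=
  Matrix.map_one _ (map_zero _) (map_one _)

lemma lft_kd {ι : Type*} [DecidableEq ι] (a b : ι) :
    algebraMap ℂ A (kd ℂ a b) = kd A a b := by
  unfold kd
  split_ifs <;> simp

lemma lft_e12 (X : M2 m ℂ) : lft A (e12 X) = e12 (lft A X) := by
  ext p q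
  simp only [lft, e12, Matrix.map_apply, of_apply, _root_.map_mul, lft_kd]

lemma lft_e23 (X : M2 m ℂ) : lft A (e23 X) = e23 (lft A X) := by
  ext p q
  simp only [lft, e23, Matrix.map_apply, of_apply, _root_.map_mul, lft_kd]

lemma lft_central (X : M2 m ℂ) : ∀ p q (x : A), Commute (lft A X p q) x :=
  fun p q x => Algebra.commutes (X p q) x

end QCB

/-! ### the chain lemmas -/

namespace QCB
variable {m k : ℕ} {A : Type*} [Semiring A] (Rl Rl' : M2 m A) (L : M1 m A)

lemma Lunder_comm (Y : M2 m A) (hY : ∀ p q (x : A), Commute (Y p q) x) :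
    ∀ j i, j + 1 ≤ i → Commute (Lunder k Rl Rl' L j) (RAt k Y i) := by
  intro j
  induction j with
  | zero => intro i hi; exact op1Nat_comm_RAt L Y hY i hi
  | succ j ih =>
    intro i hi
    show Commute (RAt k Rl' j * Lunder k Rl Rl' L j * RAt k Rl j) (RAt k Y i)
    exact ((RAt_comm_far Rl' Y j i (by omega) hY).mul_left (ih i (by omega))).mul_left
      (RAt_comm_far Rl Y j i (by omega) hY)

lemma LunderChainRev_comm (Y : M2 m A) (hY : ∀ p q (x : A), Commute (Y p q) x) :
    ∀ j i, j ≤ i → Commute (LunderChainRev k Rl Rl' L j) (RAt k Y i) := by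
  intro j
  induction j with
  | zero => intro i _; exact Commute.one_left _
  | succ j ih =>
    intro i hi
    show Commute (Lunder k Rl Rl' L j * LunderChainRev k Rl Rl' L j) (RAt k Y i)
    exact (Lunder_comm Rl Rl' L Y hY j i (by omega)).mul_left (ih i (by omega))

lemma Lunder_RE
    (hcRl : ∀ p q (x : A), Commute (Rl p q) x)
    (hcRl' : ∀ p q (x : A), Commute (Rl' p q) x)
    (hinv1 : ∀ i, RAt k Rl i * RAt k Rl' i = 1)
    (hinv2 : ∀ i, RAt k Rl' i * RAt k Rl i = 1)
    (hbr : ∀ i, i + 2 < k → RAt k Rl i * RAt k Rl (i + 1) * RAt k Rl i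
      = RAt k Rl (i + 1) * RAt k Rl i * RAt k Rl (i + 1))
    (hre : op1Nat k L 0 * RAt k Rl 0 * op1Nat k L 0 * RAt k Rl 0
      = RAt k Rl 0 * op1Nat k L 0 * RAt k Rl 0 * op1Nat k L 0) :
    ∀ j, Lunder k Rl Rl' L j * RAt k Rl j * Lunder k Rl Rl' L j * RAt k Rl j
      = RAt k Rl j * Lunder k Rl Rl' L j * RAt k Rl j * Lunder k Rl Rl' L j := by
  intro j
  induction j with
  | zero => exact hre
  | succ j ih =>
    show (RAt k Rl' j * Lunder k Rl Rl' L j * RAt k Rl j) * RAt k Rl (j + 1) *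
        (RAt k Rl' j * Lunder k Rl Rl' L j * RAt k Rl j) * RAt k Rl (j + 1)
      = RAt k Rl (j + 1) * (RAt k Rl' j * Lunder k Rl Rl' L j * RAt k Rl j) *
        RAt k Rl (j + 1) * (RAt k Rl' j * Lunder k Rl Rl' L j * RAt k Rl j)
    by_cases hcase : j + 1 + 1 < k
    · have hres := re_step (hinv1 j) (hinv2 j) (hinv1 (j + 1)) (hinv2 (j + 1))
        (hbr j hcase)
        (Lunder_comm Rl Rl' L Rl hcRl j (j + 1) le_rfl).eq
        (Lunder_comm Rl Rl' L Rl' hcRl' j (j + 1) le_rfl).eq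
        ih
      exact hres
    · rw [RAt_junk Rl (j + 1) (by omega)]
      simp only [mul_one, one_mul]

lemma Ikey
    (hcRl : ∀ p q (x : A), Commute (Rl p q) x)
    (hcRl' : ∀ p q (x : A), Commute (Rl' p q) x)
    (hinv1 : ∀ i, RAt k Rl i * RAt k Rl' i = 1)
    (hinv2 : ∀ i, RAt k Rl' i * RAt k Rl i = 1)
    (hbr : ∀ i, i + 2 < k → RAt k Rl i * RAt k Rl (i + 1) * RAt k Rl i
      = RAt k Rl (i + 1) * RAt k Rl i * RAt k Rl (i + 1))
    (hre : op1Nat k L 0 * RAt k Rl 0 * op1Nat k L 0 * RAt k Rl 0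
      = RAt k Rl 0 * op1Nat k L 0 * RAt k Rl 0 * op1Nat k L 0) :
    ∀ j, LunderChainRev k Rl Rl' L j * Lbar k Rl Rl' L j
      = Lunder k Rl Rl' L j * LunderChainRev k Rl Rl' L j := by
  intro j
  induction j with
  | zero =>
    show 1 * Lbar k Rl Rl' L 0 = Lunder k Rl Rl' L 0 * 1
    rw [one_mul, mul_one]; rfl
  | succ j ih =>
    show (Lunder k Rl Rl' L j * LunderChainRev k Rl Rl' L j) *
        (RAt k Rl j * Lbar k Rl Rl' L j * RAt k Rl' j)
      = (RAt k Rl' j * Lunder k Rl Rl' L j * RAt k Rl j) *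
        (Lunder k Rl Rl' L j * LunderChainRev k Rl Rl' L j)
    exact i_step
      (LunderChainRev_comm Rl Rl' L Rl hcRl j j le_rfl).eq
      (LunderChainRev_comm Rl Rl' L Rl' hcRl' j j le_rfl).eq
      ih
      (e1_of_re (hinv1 j) (hinv2 j)
        (Lunder_RE Rl Rl' L hcRl hcRl' hinv1 hinv2 hbr hre j))

lemma chains_eq
    (hcRl : ∀ p q (x : A), Commute (Rl p q) x)
    (hcRl' : ∀ p q (x : A), Commute (Rl' p q) x)
    (hinv1 : ∀ i, RAt k Rl i * RAt k Rl' i = 1)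
    (hinv2 : ∀ i, RAt k Rl' i * RAt k Rl i = 1)
    (hbr : ∀ i, i + 2 < k → RAt k Rl i * RAt k Rl (i + 1) * RAt k Rl i
      = RAt k Rl (i + 1) * RAt k Rl i * RAt k Rl (i + 1))
    (hre : op1Nat k L 0 * RAt k Rl 0 * op1Nat k L 0 * RAt k Rl 0
      = RAt k Rl 0 * op1Nat k L 0 * RAt k Rl 0 * op1Nat k L 0) :
    ∀ j, LbarChain k Rl Rl' L j = LunderChainRev k Rl Rl' L j := by
  intro j
  induction j with
  | zero => rfl
  | succ j ih =>
    show LbarChain k Rl Rl' L j * Lbar k Rl Rl' L j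
      = Lunder k Rl Rl' L j * LunderChainRev k Rl Rl' L j
    rw [ih, Ikey Rl Rl' L hcRl hcRl' hinv1 hinv2 hbr hre j]

end QCB

end Auxiliary

/-- For a matrix `L` over `𝔄` satisfying the reflection equation, the two products of
R-copies coincide: `L_{\bar1} L_{\bar2} ⋯ L_{\bar k} = L_{\underline k} ⋯ L_{\underline 1}`. -/
theorem statement6 {m : ℕ} (hm : 1 ≤ m) (R R' : M2 m ℂ)
    (hbraid : IsBraid R) (hRR' : R * R' = 1) (hR'R : R' * R = 1)
    (A : Type*) [Ring A] [Algebra ℂ A] (L : M1 m A)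
    (hRE : f1 L * lft A R * f1 L * lft A R = lft A R * f1 L * lft A R * f1 L)
    (k : ℕ) (hk : 1 ≤ k) :
    LbarChain k (lft A R) (lft A R') L k = LunderChainRev k (lft A R) (lft A R') L k := by
  have hcRl : ∀ p q (x : A), Commute (lft A R p q) x := lft_central R
  have hcRl' : ∀ p q (x : A), Commute (lft A R' p q) x := lft_central R'
  have hinv1 : ∀ i, RAt k (lft A R) i * RAt k (lft A R') i = 1 := fun i => by
    rw [RAt_mul, ← lft_mul, hRR', lft_one, RAt_one]
  have hinv2 : ∀ i, RAt k (lft A R') i * RAt k (lft A R) i = 1 := fun i => by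
    rw [RAt_mul, ← lft_mul, hR'R, lft_one, RAt_one]
  have hbA : e12 (lft A R) * e23 (lft A R) * e12 (lft A R)
      = e23 (lft A R) * e12 (lft A R) * e23 (lft A R) := by
    have hb : e12 R * e23 R * e12 R = e23 R * e12 R * e23 R := hbraid
    have := congrArg (lft A) hb
    simpa only [lft_mul, lft_e12, lft_e23] using this
  have hbr : ∀ i, i + 2 < k →
      RAt k (lft A R) i * RAt k (lft A R) (i + 1) * RAt k (lft A R) i
        = RAt k (lft A R) (i + 1) * RAt k (lft A R) i * RAt k (lft A R) (i + 1) :=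
    fun i h => RAt_braid (lft A R) hbA i h
  have hre : op1Nat k L 0 * RAt k (lft A R) 0 * op1Nat k L 0 * RAt k (lft A R) 0
      = RAt k (lft A R) 0 * op1Nat k L 0 * RAt k (lft A R) 0 * op1Nat k L 0 := by
    by_cases h2 : 1 < k
    · have h0 : 0 < k := by omega
      have h1 : (0 : ℕ) + 1 < k := by omega
      have hne : (⟨0, h0⟩ : Fin k) ≠ ⟨1, h2⟩ := fin_ne_of_ne (by omega) _ _
      have hz : op1Nat k L 0 = op2At k (f1 L) ⟨0, h0⟩ ⟨1, h2⟩ := by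
        rw [op1Nat, dif_pos h0]
        exact op1At_eq_op2At_f1 _ _ hne L
      have hr : RAt k (lft A R) 0 = op2At k (lft A R) ⟨0, h0⟩ ⟨1, h2⟩ := by
        rw [RAt, dif_pos h1]
      rw [hz, hr, op2At_mul_same _ _ hne, op2At_mul_same _ _ hne, op2At_mul_same _ _ hne,
        op2At_mul_same _ _ hne, op2At_mul_same _ _ hne, op2At_mul_same _ _ hne, hRE]
    · rw [RAt_junk (lft A R) 0 (by omega)]
      simp only [mul_one, one_mul]
  exact chains_eq (lft A R) (lft A R') L hcRl hcRl' hinv1 hinv2 hbr hre k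
end

section
/- Let 𝔄 be a unital associative ℂ-algebra, q, γ ∈ ℂ∖{0}, and let L, M, T be m×m matrices over 𝔄 and μ₁,…,μ_n ∈ 𝔄 invertible pairwise-commuting elements commuting with every entry of L and of M, with μ_α − μ_β invertible for α ≠ β (inverses commuting with the μ's and with entries of L, M). Suppose: L·P^α = P^α·L = qμ_α·P^α where P^α := ∏_{β≠α}(L − qμ_β·I)/(q(μ_α − μ_β)); T·M = L·T; and γ²(P^αT)μ_β = q^{2δ_{αβ}}μ_β(P^αT) for all α, β. Define S^α := ∏_{β≠α}(M − γ²q^{−1}μ_β·I)/(γ²q^{−1}(μ_α − μ_β)). Then P^α·T·S^β = δ_{αβ}·P^α·T for all α, β; moreover, if additionally Σ_{α=1}^n P^α = I and Σ_{α=1}^n S^α = I, then P^α·T = T·S^α for every α. -/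
open QCB Matrix

/-- Relation between the two families of spectral projectors `P^α` (built from `L`) and
`S^α` (built from `M`): `P^α T S^β = δ_{αβ} P^α T`, and, when both families resolve the
identity, `P^α T = T S^α`.  Here `ν α β` plays the role of `(μ_α − μ_β)⁻¹`,
`P^α = projGen q L μ ν α` and `S^α = projGen (γ² q⁻¹) M μ ν α`. -/
theorem statement10 {m n : ℕ} (hm : 1 ≤ m) (hn : 1 ≤ n) (q γ : ℂ) (hq : q ≠ 0) (hγ : γ ≠ 0)
    (A : Type*) [Ring A] [Algebra ℂ A] (L M T : M1 m A)
    (μ : Fin n → A) (ν : Fin n → Fin n → A)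
    (hμunit : ∀ α, IsUnit (μ α))
    (hμcomm : ∀ α β, μ α * μ β = μ β * μ α)
    (hμL : ∀ α a b, μ α * L a b = L a b * μ α)
    (hμM : ∀ α a b, μ α * M a b = M a b * μ α)
    (hν : ∀ α β, α ≠ β → (μ α - μ β) * ν α β = 1 ∧ ν α β * (μ α - μ β) = 1)
    (hνμ : ∀ α β σ, ν α β * μ σ = μ σ * ν α β)
    (hνL : ∀ α β a b, ν α β * L a b = L a b * ν α β)
    (hνM : ∀ α β a b, ν α β * M a b = M a b * ν α β)
    (hLP : ∀ α, L * projGen q L μ ν α = projGen q L μ ν α * L ∧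
      L * projGen q L μ ν α =
        Matrix.diagonal (fun _ => q • μ α) * projGen q L μ ν α)
    (hTM : T * M = L * T)
    (hPTμ : ∀ α β : Fin n,
      (γ ^ 2 : ℂ) • (projGen q L μ ν α * T * Matrix.diagonal fun _ => μ β) =
        (if α = β then q ^ 2 else 1 : ℂ) •
          (Matrix.diagonal (fun _ => μ β) * (projGen q L μ ν α * T))) :
    (∀ α β : Fin n,
      projGen q L μ ν α * T * projGen (γ ^ 2 * q⁻¹) M μ ν β =
        (if α = β then 1 else 0 : ℂ) • (projGen q L μ ν α * T)) ∧
    ((∑ α, projGen q L μ ν α) = 1 → (∑ α, projGen (γ ^ 2 * q⁻¹) M μ ν α) = 1 →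
      ∀ α, projGen q L μ ν α * T = T * projGen (γ ^ 2 * q⁻¹) M μ ν α) := by
  
  classical
  have hc0 : (γ ^ 2 * q⁻¹ : ℂ) ≠ 0 := mul_ne_zero (pow_ne_zero _ hγ) (inv_ne_zero hq)
  set c : ℂ := γ ^ 2 * q⁻¹ with hc
  -- small element-level commuting helpers
  have mulcomm3 : ∀ x y z : A, x * z = z * x → y * z = z * y → x * y * z = z * (x * y) := by
    intro x y z h1 h2
    calc x * y * z = x * (y * z) := mul_assoc _ _ _
      _ = x * (z * y) := by rw [h2]
      _ = x * z * y := (mul_assoc _ _ _).symm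
      _ = z * x * y := by rw [h1]
      _ = z * (x * y) := mul_assoc _ _ _
  have subcomm : ∀ x y z : A, x * z = z * x → y * z = z * y → (x - y) * z = z * (x - y) := by
    intro x y z h1 h2; rw [sub_mul, mul_sub, h1, h2]
  -- ν commutes with ν
  have hνν : ∀ s t u v : Fin n, s ≠ t → u ≠ v → ν s t * ν u v = ν u v * ν s t := by
    intro s t u v hst huv
    have hb : ν s t * (μ u - μ v) = (μ u - μ v) * ν s t := by
      rw [mul_sub, sub_mul, hνμ, hνμ]
    have hcomm : Commute (ν s t)
        ((⟨μ u - μ v, ν u v, (hν u v huv).1, (hν u v huv).2⟩ : Aˣ) : A) := hb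
    exact hcomm.units_inv_right
  -- diagonal helpers
  have diagSmul : ∀ (r : ℂ) (x : A),
      Matrix.diagonal (fun _ : Fin m => r • x) = r • Matrix.diagonal (fun _ : Fin m => x) := by
    intro r x; ext i j; by_cases h : i = j <;> simp [Matrix.diagonal_apply, h]
  have diagCommM : ∀ (x : A) (Y : M1 m A), (∀ a b, x * Y a b = Y a b * x) →
      (Matrix.diagonal fun _ => x) * Y = Y * Matrix.diagonal fun _ => x := by
    intro x Y h; ext a b
    simp [Matrix.diagonal_mul, Matrix.mul_diagonal, h a b]
  -- the main δ-relation
  have main : ∀ α β : Fin n, projGen q L μ ν α * T * projGen c M μ ν β =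
      (if α = β then (1 : ℂ) else 0) • (projGen q L μ ν α * T) := by
    intro α β
    set X := projGen q L μ ν α * T with hX
    have hμαX : q • ((Matrix.diagonal fun _ : Fin m => μ α) * X) =
        c • (X * Matrix.diagonal fun _ => μ α) := by
      have h := hPTμ α α
      rw [if_pos rfl] at h
      calc q • ((Matrix.diagonal fun _ : Fin m => μ α) * X)
          = q⁻¹ • ((q ^ 2 : ℂ) • ((Matrix.diagonal fun _ : Fin m => μ α) * X)) := by
            rw [smul_smul]; congr 1; field_simp
        _ = q⁻¹ • ((γ ^ 2 : ℂ) • (X * Matrix.diagonal fun _ => μ α)) := by rw [← h]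
        _ = c • (X * Matrix.diagonal fun _ => μ α) := by
            rw [smul_smul, hc]; congr 1; ring
    have hXM : X * M = X * Matrix.diagonal (fun _ => c • μ α) := by
      calc X * M = projGen q L μ ν α * (T * M) := by rw [hX, mul_assoc]
        _ = projGen q L μ ν α * (L * T) := by rw [hTM]
        _ = projGen q L μ ν α * L * T := (mul_assoc _ _ _).symm
        _ = (Matrix.diagonal fun _ => q • μ α) * projGen q L μ ν α * T := by
            rw [← (hLP α).1, (hLP α).2]
        _ = (Matrix.diagonal fun _ => q • μ α) * X := by rw [hX, mul_assoc]
        _ = q • ((Matrix.diagonal fun _ : Fin m => μ α) * X) := by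
            rw [diagSmul, smul_mul_assoc]
        _ = c • (X * Matrix.diagonal fun _ => μ α) := hμαX
        _ = X * Matrix.diagonal (fun _ => c • μ α) := by
            rw [diagSmul, mul_smul_comm]
    -- absorbing one factor
    have hXf : ∀ σ : Fin n,
        X * ((M - Matrix.diagonal fun _ => c • μ σ) * Matrix.diagonal fun _ => c⁻¹ • ν β σ) =
          X * Matrix.diagonal fun _ => (μ α - μ σ) * ν β σ := by
      intro σ
      have e1 : X * (M - Matrix.diagonal fun _ => c • μ σ) =
          X * Matrix.diagonal (fun _ => c • (μ α - μ σ)) := by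
        rw [mul_sub, hXM, ← mul_sub]
        congr 1
        rw [Matrix.diagonal_sub]
        congr 1; funext _; rw [smul_sub]
      rw [← mul_assoc, e1, mul_assoc, Matrix.diagonal_mul_diagonal]
      congr 1
      funext _
      rw [smul_mul_assoc, mul_smul_comm, smul_smul, mul_inv_cancel₀ hc0, one_smul]
    -- commuting properties of g σ := (μ α - μ σ) * ν β σ
    have hgood : ∀ σ : Fin n, σ ≠ β →
        (∀ a b, (μ α - μ σ) * ν β σ * M a b = M a b * ((μ α - μ σ) * ν β σ)) ∧
        (∀ s, (μ α - μ σ) * ν β σ * μ s = μ s * ((μ α - μ σ) * ν β σ)) ∧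
        (∀ s t, s ≠ t → (μ α - μ σ) * ν β σ * ν s t = ν s t * ((μ α - μ σ) * ν β σ)) := by
      intro σ hσβ
      refine ⟨fun a b => ?_, fun s => ?_, fun s t hst => ?_⟩
      · exact mulcomm3 _ _ _ (subcomm _ _ _ (hμM α a b) (hμM σ a b)) (hνM β σ a b)
      · exact mulcomm3 _ _ _ (subcomm _ _ _ (hμcomm α s) (hμcomm σ s)) (hνμ β σ s)
      · exact mulcomm3 _ _ _
          (subcomm _ _ _ (hνμ s t α).symm (hνμ s t σ).symm)
          (hνν β σ s t (Ne.symm hσβ) hst)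
    -- the induction along the list of factors
    have chain : ∀ (l : List (Fin n)), (∀ σ ∈ l, σ ≠ β) → ∀ x : A,
        (∀ a b, x * M a b = M a b * x) → (∀ s, x * μ s = μ s * x) →
        (∀ s t, s ≠ t → x * ν s t = ν s t * x) →
        X * Matrix.diagonal (fun _ => x) *
          (l.map fun σ => (M - Matrix.diagonal fun _ => c • μ σ) *
            Matrix.diagonal fun _ => c⁻¹ • ν β σ).prod =
        X * Matrix.diagonal (fun _ => x * (l.map fun σ => (μ α - μ σ) * ν β σ).prod) := by
      intro l
      induction l with
      | nil => intro _ x _ _ _; simp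
      | cons σ l ih =>
        intro hmem x hx1 hx2 hx3
        have hσβ : σ ≠ β := hmem σ List.mem_cons_self
        obtain ⟨hg1, hg2, hg3⟩ := hgood σ hσβ
        have hxg : x * ((μ α - μ σ) * ν β σ) = (μ α - μ σ) * ν β σ * x := by
          have := mulcomm3 (μ α - μ σ) (ν β σ) x
            (subcomm _ _ _ (hx2 α).symm (hx2 σ).symm) (hx3 β σ (Ne.symm hσβ)).symm
          exact this.symm
        -- diag x commutes with the factor
        have c1 : (Matrix.diagonal fun _ : Fin m => x) * (M - Matrix.diagonal fun _ => c • μ σ) =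
            (M - Matrix.diagonal fun _ => c • μ σ) * Matrix.diagonal fun _ => x := by
          apply diagCommM
          intro a b
          have hd : x * ((Matrix.diagonal fun _ : Fin m => c • μ σ) a b) =
              ((Matrix.diagonal fun _ : Fin m => c • μ σ) a b) * x := by
            by_cases h : a = b <;>
              simp [Matrix.diagonal_apply, h, mul_smul_comm, smul_mul_assoc, hx2 σ]
          simp only [Matrix.sub_apply, mul_sub, sub_mul, hx1 a b, hd]
        have c2 : (Matrix.diagonal fun _ : Fin m => x) *
              (Matrix.diagonal fun _ : Fin m => c⁻¹ • ν β σ) =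
            (Matrix.diagonal fun _ : Fin m => c⁻¹ • ν β σ) * Matrix.diagonal fun _ => x := by
          rw [Matrix.diagonal_mul_diagonal, Matrix.diagonal_mul_diagonal]
          congr 1; funext _
          rw [mul_smul_comm, smul_mul_assoc, hx3 β σ (Ne.symm hσβ)]
        have hcd : (Matrix.diagonal fun _ : Fin m => x) *
              ((M - Matrix.diagonal fun _ => c • μ σ) * Matrix.diagonal fun _ => c⁻¹ • ν β σ) =
            ((M - Matrix.diagonal fun _ => c • μ σ) * Matrix.diagonal fun _ => c⁻¹ • ν β σ) *
              Matrix.diagonal fun _ => x := by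
          calc (Matrix.diagonal fun _ : Fin m => x) *
                ((M - Matrix.diagonal fun _ => c • μ σ) * Matrix.diagonal fun _ => c⁻¹ • ν β σ)
              = ((Matrix.diagonal fun _ : Fin m => x) * (M - Matrix.diagonal fun _ => c • μ σ)) *
                  Matrix.diagonal fun _ => c⁻¹ • ν β σ := (mul_assoc _ _ _).symm
            _ = ((M - Matrix.diagonal fun _ => c • μ σ) * Matrix.diagonal fun _ => x) *
                  Matrix.diagonal fun _ => c⁻¹ • ν β σ := by rw [c1]
            _ = (M - Matrix.diagonal fun _ => c • μ σ) *
                  ((Matrix.diagonal fun _ : Fin m => x) * Matrix.diagonal fun _ => c⁻¹ • ν β σ) := by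
                rw [mul_assoc]
            _ = (M - Matrix.diagonal fun _ => c • μ σ) *
                  ((Matrix.diagonal fun _ : Fin m => c⁻¹ • ν β σ) * Matrix.diagonal fun _ => x) := by
                rw [c2]
            _ = _ := by rw [mul_assoc]
        have step : X * Matrix.diagonal (fun _ => x) *
              ((M - Matrix.diagonal fun _ => c • μ σ) * Matrix.diagonal fun _ => c⁻¹ • ν β σ) =
            X * Matrix.diagonal (fun _ => x * ((μ α - μ σ) * ν β σ)) := by
          rw [mul_assoc, hcd, ← mul_assoc, hXf σ, mul_assoc, Matrix.diagonal_mul_diagonal]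
          have hfun : (fun _ : Fin m => (μ α - μ σ) * ν β σ * x) =
              fun _ => x * ((μ α - μ σ) * ν β σ) := funext fun _ => hxg.symm
          rw [hfun]
        rw [List.map_cons, List.prod_cons, List.map_cons, List.prod_cons, ← mul_assoc, step,
          ih (fun τ ht => hmem τ (List.mem_cons_of_mem _ ht)) (x * ((μ α - μ σ) * ν β σ))
            (fun a b => mulcomm3 _ _ _ (hx1 a b) (hg1 a b))
            (fun s => mulcomm3 _ _ _ (hx2 s) (hg2 s))
            (fun s t hst => mulcomm3 _ _ _ (hx3 s t hst) (hg3 s t hst))]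
        congr 1
        funext _
        rw [mul_assoc]
    -- assemble
    have hfilt : ∀ σ ∈ (List.finRange n).filter fun σ => decide (σ ≠ β), σ ≠ β := by
      intro σ hσ
      simpa using (List.mem_filter.mp hσ).2
    have key := chain ((List.finRange n).filter fun σ => decide (σ ≠ β)) hfilt 1
      (fun a b => by rw [one_mul, mul_one]) (fun s => by rw [one_mul, mul_one])
      (fun s t _ => by rw [one_mul, mul_one])
    simp only [Matrix.diagonal_one, mul_one, one_mul] at key
    show X * projGen c M μ ν β = _
    rw [projGen, listProd, key]
    by_cases h : α = β
    · subst h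
      have hone : (((List.finRange n).filter fun σ => decide (σ ≠ α)).map
          fun σ => (μ α - μ σ) * ν α σ).prod = 1 := by
        apply List.prod_eq_one
        intro y hy
        obtain ⟨σ, hσ, rfl⟩ := List.mem_map.mp hy
        exact (hν α σ (Ne.symm (hfilt σ hσ))).1
      rw [if_pos rfl, one_smul, hone, Matrix.diagonal_one, mul_one]
    · have hz : (0 : A) ∈ ((List.finRange n).filter fun σ => decide (σ ≠ β)).map
          fun σ => (μ α - μ σ) * ν β σ := by
        refine List.mem_map.mpr ⟨α, ?_, by rw [sub_self, zero_mul]⟩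
        simp [List.mem_filter, h]
      rw [if_neg h, zero_smul, List.prod_eq_zero hz]
      simp
  refine ⟨main, ?_⟩
  intro hP _ α
  symm
  calc T * projGen c M μ ν α
      = (∑ β, projGen q L μ ν β) * (T * projGen c M μ ν α) := by rw [hP, one_mul]
    _ = ∑ β, projGen q L μ ν β * (T * projGen c M μ ν α) := Finset.sum_mul _ _ _
    _ = ∑ β, (if β = α then (1 : ℂ) else 0) • (projGen q L μ ν β * T) := by
        refine Finset.sum_congr rfl fun β _ => ?_
        rw [← mul_assoc, main β α]
    _ = projGen q L μ ν α * T := by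
        simp [ite_smul]
end
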